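/- arXiv:2208.05148 — 2 statements merged into one kernel-verified Lean document; each statement's English description precedes it below -/
import Mathlib

section
/- Let T be a binary tree with n ≥ 1 leaves and let x, y be two distinct leaves of T with at least one branch point on the path from x to y. Then there is a unique branch point b on the path connecting x and y such that, in the decomposition of T obtained by splitting at b into three branches (with the branch containing x listed first and the branch containing y second), the branch containing x has strictly fewer than n/2 leaves of T \ {x,y} and the branch containing y has at most n/2 leaves of T \ {x,y}. (This b is called the semi-centroid relative to (x,y).) -/
open scoped Classical ENNReal
open SimpleGraph MeasureTheory ProbabilityTheory

noncomputable section

/-- A leaf-labeled binary tree with leaf labels in `A`: a finite tree in which every vertex has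
degree 1 or 3, together with a bijective labeling of its degree-1 vertices (leaves) by `A`. -/
structure LBT (A : Type*) where
  n : ℕ
  G : SimpleGraph (Fin n)
  tree : G.IsTree
  deg : ∀ v, G.degree v = 1 ∨ G.degree v = 3
  label : {v : Fin n // G.degree v = 1} ≃ A

/-- Label-preserving isomorphism of leaf-labeled binary trees. -/
def LBT.Equiv {A : Type*} (t s : LBT A) : Prop :=
  ∃ φ : t.G ≃g s.G, ∀ v : {v : Fin t.n // t.G.degree v = 1},
    ∀ h : s.G.degree (φ v.1) = 1, s.label ⟨φ v.1, h⟩ = t.label v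

/-- Leaf-labeled binary trees with leaf set `A`, up to label-preserving isomorphism. -/
def TQ (A : Type*) : Type _ := Quot (@LBT.Equiv A)

instance (A : Type*) : MeasurableSpace (TQ A) := ⊤

/-- The leaf of `t` carrying the label `a`. -/
def LBT.leaf {A : Type*} (t : LBT A) (a : A) : Fin t.n := (t.label.symm a).1

/-- `t.Sep a b c d` : the path from leaf `a` to leaf `b` is vertex-disjoint from the path from
leaf `c` to leaf `d` (i.e. the quartet has topology `ab|cd`). -/
def LBT.Sep {A : Type*} (t : LBT A) (a b c d : A) : Prop :=
  ∃ (p : t.G.Walk (t.leaf a) (t.leaf b)) (q : t.G.Walk (t.leaf c) (t.leaf d)),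
    p.IsPath ∧ q.IsPath ∧ ∀ v ∈ p.support, v ∉ q.support

/-- `s` is (equivalent to) the binary tree induced by `t` on the leaf-label set `e '' univ`,
where the injection `e` prescribes the renaming of labels: this holds iff all quartet topologies
agree, which characterizes the induced subtree. -/
def IsRestrictionAlong {A B : Type*} (t : LBT A) (s : LBT B) (e : B → A) : Prop :=
  Function.Injective e ∧
  ∀ a b c d : B, a ≠ b → a ≠ c → a ≠ d → b ≠ c → b ≠ d → c ≠ d →
    (s.Sep a b c d ↔ t.Sep (e a) (e b) (e c) (e d))

/-- `u` and `v` lie in the same connected component after deleting the vertex `b`. -/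
def SameComp {V : Type*} (G : SimpleGraph V) (b u v : V) : Prop :=
  ∃ p : G.Walk u v, b ∉ p.support

/-- The uniform probability measure on a (finite) type. -/
noncomputable def unif (X : Type*) [MeasurableSpace X] : Measure X :=
  uniformOn (Set.univ : Set X)

/-- `c m = (2m-5)!! = 1·3·5···(2m-5)`, the number of leaf-labeled binary trees on `m` leaves. -/
def numTrees (m : ℕ) : ℕ := Nat.doubleFactorial (2 * m - 5)

end

namespace SemiCentroidAux

open SimpleGraph

variable {V : Type*} {G : SimpleGraph V}

noncomputable def P (hT : G.IsTree) (u v : V) : G.Walk u v :=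
  (hT.existsUnique_path u v).exists.choose

lemma P_isPath (hT : G.IsTree) (u v : V) : (P hT u v).IsPath :=
  (hT.existsUnique_path u v).exists.choose_spec

lemma P_unique (hT : G.IsTree) {u v : V} (q : G.Walk u v) (hq : q.IsPath) : q = P hT u v :=
  (hT.existsUnique_path u v).unique hq (P_isPath hT u v)

lemma P_length (hT : G.IsTree) (u v : V) : (P hT u v).length = G.dist u v := by
  obtain ⟨q, hq, hl⟩ := hT.isConnected.exists_path_of_dist u v
  rwa [P_unique hT q hq] at hl

lemma dist_getVert_le (hc : G.Connected) {u v : V} (w : G.Walk u v) {i : ℕ}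
    (hi : i ≤ w.length) : G.dist u (w.getVert i) ≤ i := by
  induction i with
  | zero => simp
  | succ m ih =>
    have h1 : G.dist u (w.getVert m) ≤ m := ih (by omega)
    have hadj : G.Adj (w.getVert m) (w.getVert (m + 1)) := w.adj_getVert_succ (by omega)
    have h2 : G.dist (w.getVert m) (w.getVert (m + 1)) ≤ 1 :=
      dist_le (SimpleGraph.Walk.cons hadj SimpleGraph.Walk.nil)
    have h3 := hc.dist_triangle (u := u) (v := w.getVert m) (w := w.getVert (m + 1))
    omega

lemma dist_getVert_le' (hc : G.Connected) {u v : V} (w : G.Walk u v) {i : ℕ}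
    (hi : i ≤ w.length) : G.dist (w.getVert i) v ≤ w.length - i := by
  have h0 : w.length - i ≤ w.reverse.length := by
    rw [SimpleGraph.Walk.length_reverse]; omega
  have h1 := dist_getVert_le hc w.reverse h0
  rw [SimpleGraph.Walk.getVert_reverse, show w.length - (w.length - i) = i by omega] at h1
  rw [SimpleGraph.dist_comm]
  exact h1

lemma mem_P_iff (hT : G.IsTree) (b u w : V) :
    b ∈ (P hT u w).support ↔ G.dist u b + G.dist b w = G.dist u w := by
  constructor
  · intro hb
    have h1 : ((P hT u w).takeUntil b hb) = P hT u b :=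
      P_unique hT _ ((P_isPath hT u w).takeUntil hb)
    have h2 : ((P hT u w).dropUntil b hb) = P hT b w :=
      P_unique hT _ ((P_isPath hT u w).dropUntil hb)
    have h3 := congrArg SimpleGraph.Walk.length ((P hT u w).take_spec hb)
    rw [SimpleGraph.Walk.length_append, h1, h2, P_length, P_length, P_length] at h3
    exact h3
  · intro hd
    have hlen : ((P hT u b).append (P hT b w)).length = G.dist u w := by
      rw [SimpleGraph.Walk.length_append, P_length, P_length]; exact hd
    have hpath : ((P hT u b).append (P hT b w)).IsPath :=
      SimpleGraph.Walk.isPath_of_length_eq_dist _ hlen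
    rw [← P_unique hT _ hpath, SimpleGraph.Walk.mem_support_append_iff]
    exact Or.inl (SimpleGraph.Walk.end_mem_support _)

lemma sameComp_iff (hT : G.IsTree) (b u w : V) :
    SameComp G b u w ↔ b ∉ (P hT u w).support := by
  constructor
  · rintro ⟨q, hq⟩ hb
    have h1 : (q.toPath : G.Walk u w) = P hT u w := P_unique hT _ q.toPath.2
    exact hq (SimpleGraph.Walk.support_toPath_subset q (h1 ▸ hb))
  · intro h; exact ⟨P hT u w, h⟩

lemma dichotomy (hT : G.IsTree) {x y b : V} (hb : b ∈ (P hT x y).support) (v : V) :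
    b ∈ (P hT v x).support ∨ b ∈ (P hT v y).support := by
  by_contra h
  push_neg at h
  obtain ⟨h1, h2⟩ := h
  set q := ((P hT v x).reverse.append (P hT v y)) with hq
  have hbq : b ∉ q.support := by
    rw [hq, SimpleGraph.Walk.mem_support_append_iff, SimpleGraph.Walk.support_reverse]
    simp only [List.mem_reverse]
    tauto
  have h3 : (q.toPath : G.Walk x y) = P hT x y := P_unique hT _ q.toPath.2
  exact hbq (SimpleGraph.Walk.support_toPath_subset q (h3 ▸ hb))

lemma adj_dist (hT : G.IsTree) (r : V) {u w : V} (h : G.Adj u w) :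
    G.dist r u + 1 = G.dist r w ∨ G.dist r w + 1 = G.dist r u := by
  by_cases hm : w ∈ (P hT r u).support
  · right
    have h1 := (mem_P_iff hT w r u).mp hm
    have hd : G.dist w u = 1 := by rw [SimpleGraph.dist_eq_one_iff_adj]; exact h.symm
    omega
  · left
    have hpath : ((P hT r u).concat h).IsPath := by
      rw [SimpleGraph.Walk.isPath_def, SimpleGraph.Walk.support_concat]
      simp only [List.concat_eq_append, List.nodup_append]
      refine ⟨(P_isPath hT r u).2, List.nodup_singleton w, ?_⟩
      intro a ha hb
      intro hw heq
      simp only [List.mem_singleton] at hw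
      subst hw; subst heq; exact hm ha
    have h1 := congrArg SimpleGraph.Walk.length (P_unique hT _ hpath)
    rw [SimpleGraph.Walk.length_concat, P_length, P_length] at h1
    exact h1

lemma walk_parity (hT : G.IsTree) (r : V) {u v : V} (q : G.Walk u v) :
    (G.dist r u + q.length) % 2 = G.dist r v % 2 := by
  induction q with
  | nil => simp
  | @cons a b c h q ih =>
    rcases adj_dist hT r h with h1 | h1 <;>
      simp only [SimpleGraph.Walk.length_cons] <;> omega

lemma parity (hT : G.IsTree) (x y v : V) :
    (G.dist x v + G.dist v y) % 2 = G.dist x y % 2 := by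
  have h := walk_parity hT x ((P hT x v).append (P hT v y))
  rwa [SimpleGraph.Walk.length_append, P_length, P_length, SimpleGraph.dist_self,
    Nat.zero_add] at h

lemma claimX (hT : G.IsTree) {x y b : V} (hb : b ∈ (P hT x y).support) (v : V) :
    SameComp G b v x ↔ G.dist x v + G.dist x y < G.dist y v + 2 * G.dist x b := by
  have hc := hT.isConnected
  have hsum : G.dist x b + G.dist b y = G.dist x y := (mem_P_iff hT b x y).mp hb
  have c1 : G.dist v x = G.dist x v := SimpleGraph.dist_comm
  have c2 : G.dist b x = G.dist x b := SimpleGraph.dist_comm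
  have c3 : G.dist y b = G.dist b y := SimpleGraph.dist_comm
  have c4 : G.dist v b = G.dist b v := SimpleGraph.dist_comm
  have c5 : G.dist v y = G.dist y v := SimpleGraph.dist_comm
  rw [sameComp_iff hT]
  by_cases hm : b ∈ (P hT v x).support
  · have h1 := (mem_P_iff hT b v x).mp hm
    have h2 : G.dist y v ≤ G.dist y b + G.dist b v := hc.dist_triangle
    exact iff_of_false (not_not_intro hm) (by omega)
  · have hm2 : b ∈ (P hT v y).support := (dichotomy hT hb v).resolve_left hm
    have h1 := (mem_P_iff hT b v y).mp hm2
    have h2 : G.dist v x ≤ G.dist v b + G.dist b x := hc.dist_triangle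
    have h3 : G.dist v b + G.dist b x ≠ G.dist v x := fun hEq => hm ((mem_P_iff hT b v x).mpr hEq)
    exact iff_of_true hm (by omega)

lemma eq_of_mem_dist (hT : G.IsTree) {x y b b' : V} (hb : b ∈ (P hT x y).support)
    (hb' : b' ∈ (P hT x y).support) (h : G.dist x b = G.dist x b') : b = b' := by
  have hc := hT.isConnected
  have h1 := (mem_P_iff hT b x y).mp hb
  have h2 := (mem_P_iff hT b' x y).mp hb'
  have hsplit : b' ∈ ((P hT x y).takeUntil b hb).support ∨
      b' ∈ ((P hT x y).dropUntil b hb).support := by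
    rw [← SimpleGraph.Walk.mem_support_append_iff, (P hT x y).take_spec hb]; exact hb'
  have htake : (P hT x y).takeUntil b hb = P hT x b :=
    P_unique hT _ ((P_isPath hT x y).takeUntil hb)
  have hdrop : (P hT x y).dropUntil b hb = P hT b y :=
    P_unique hT _ ((P_isPath hT x y).dropUntil hb)
  rcases hsplit with hmem | hmem
  · rw [htake] at hmem
    have h3 := (mem_P_iff hT b' x b).mp hmem
    have h4 : G.dist b' b = 0 := by omega
    exact ((hc.dist_eq_zero_iff).mp h4).symm
  · rw [hdrop] at hmem
    have h3 := (mem_P_iff hT b' b y).mp hmem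
    have h4 : G.dist b b' = 0 := by omega
    exact (hc.dist_eq_zero_iff).mp h4

lemma nbr_unique [Fintype V] {x z z' : V} (hx : G.degree x = 1) (h1 : G.Adj x z)
    (h2 : G.Adj x z') : z = z' := by
  have hcard : (G.neighborFinset x).card ≤ 1 := le_of_eq hx
  exact Finset.card_le_one.mp hcard z ((G.mem_neighborFinset x z).mpr h1) z'
    ((G.mem_neighborFinset x z').mpr h2)

lemma leaf_dist [Fintype V] (hT : G.IsTree) {x z v : V} (hx : G.degree x = 1)
    (hadj : G.Adj x z) (hv : v ≠ x) : G.dist z v + 1 = G.dist x v := by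
  have hc := hT.isConnected
  set q := P hT x v with hqdef
  have hlen : q.length = G.dist x v := P_length hT x v
  have hpos : 0 < q.length := by
    rw [hlen]; exact hc.pos_dist_of_ne (Ne.symm hv)
  have hadj' : G.Adj x (q.getVert 1) := by
    have := q.adj_getVert_succ (i := 0) hpos
    rwa [SimpleGraph.Walk.getVert_zero] at this
  have hzz : z = q.getVert 1 := nbr_unique hx hadj hadj'
  have h1 : G.dist (q.getVert 1) v ≤ q.length - 1 := dist_getVert_le' hc q (by omega)
  have h2 : G.dist x v ≤ G.dist x z + G.dist z v := hc.dist_triangle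
  have h3 : G.dist x z ≤ 1 := dist_le (SimpleGraph.Walk.cons hadj SimpleGraph.Walk.nil)
  rw [← hzz] at h1
  rw [hlen] at h1
  omega

end SemiCentroidAux


/-- existence and uniqueness of the semi-centroid of the path between two leaves
`x, y` of a binary tree: the unique branch point `b` on the `x`–`y` path such that, among the `n`
leaves of `T` other than `x` and `y`, strictly fewer than `n/2` lie in the branch of `x` and at
most `n/2` lie in the branch of `y`. -/
theorem semiCentroid_exists_unique {V : Type*} [Fintype V] (G : SimpleGraph V) (hT : G.IsTree)
    (hdeg : ∀ v, G.degree v = 1 ∨ G.degree v = 3) (x y : V) (hx : G.degree x = 1)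
    (hy : G.degree y = 1) (hxy : x ≠ y) (n : ℕ) (hn : 1 ≤ n)
    (hcount : (({v : V | G.degree v = 1} \ {x, y}) : Set V).ncard = n)
    (hbranch : ∃ b : V, G.degree b = 3 ∧ ∃ p : G.Walk x y, p.IsPath ∧ b ∈ p.support) :
    ∃! b : V, (G.degree b = 3 ∧ (∃ p : G.Walk x y, p.IsPath ∧ b ∈ p.support)) ∧
      2 * ({v : V | G.degree v = 1 ∧ v ∉ ({x, y} : Set V) ∧ SameComp G b v x}).ncard < n ∧
      2 * ({v : V | G.degree v = 1 ∧ v ∉ ({x, y} : Set V) ∧ SameComp G b v y}).ncard ≤ n := by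
  classical
  have hc := hT.isConnected
  set p := SemiCentroidAux.P hT x y with hpdef
  set k := G.dist x y with hkdef
  have hk0 : 0 < k := hc.pos_dist_of_ne hxy
  have hplen : p.length = k := SemiCentroidAux.P_length hT x y
  -- the leaf set
  set L : Set V := {v : V | G.degree v = 1} \ {x, y} with hLdef
  have hLmem : ∀ v, v ∈ L ↔ G.degree v = 1 ∧ v ≠ x ∧ v ≠ y := by
    intro v
    rw [hLdef]
    simp only [Set.mem_diff, Set.mem_setOf_eq, Set.mem_insert_iff,
      Set.mem_singleton_iff, not_or]
  set X : ℕ → Set V := fun i => {v ∈ L | G.dist x v + k < G.dist y v + 2 * i} with hXdef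
  set N : ℕ → ℕ := fun i => (X i).ncard with hNdef
  have hXmem : ∀ i v, v ∈ X i ↔ v ∈ L ∧ G.dist x v + k < G.dist y v + 2 * i := by
    intro i v; simp only [hXdef, Set.mem_setOf_eq, Set.mem_sep_iff]
  -- membership of candidates on the canonical path
  have hsupp_iff : ∀ b : V, (∃ q : G.Walk x y, q.IsPath ∧ b ∈ q.support) ↔ b ∈ p.support := by
    intro b
    constructor
    · rintro ⟨q, hq, hbq⟩
      rwa [SemiCentroidAux.P_unique hT q hq] at hbq
    · intro hb; exact ⟨p, SemiCentroidAux.P_isPath hT x y, hb⟩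
  -- getVert distances
  have hgv : ∀ i, i ≤ k → G.dist x (p.getVert i) = i ∧ G.dist (p.getVert i) y + i = k := by
    intro i hi
    have h1 := SemiCentroidAux.dist_getVert_le hc p (i := i) (by omega)
    have h2 := SemiCentroidAux.dist_getVert_le' hc p (i := i) (by omega)
    rw [hplen] at h2
    have h3 : k ≤ G.dist x (p.getVert i) + G.dist (p.getVert i) y := hc.dist_triangle
    omega
  -- set identification, x side
  have hsetX : ∀ b ∈ p.support,
      {v : V | G.degree v = 1 ∧ v ∉ ({x, y} : Set V) ∧ SameComp G b v x} = X (G.dist x b) := by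
    intro b hb
    ext v
    have hcl := SemiCentroidAux.claimX hT hb v
    rw [hXmem, hLmem]
    simp only [Set.mem_setOf_eq, Set.mem_insert_iff, Set.mem_singleton_iff, not_or]
    rw [hcl, ← hkdef]
    tauto
  -- set identification, y side
  have hrev : SemiCentroidAux.P hT y x = p.reverse :=
    (SemiCentroidAux.P_unique hT p.reverse ((SemiCentroidAux.P_isPath hT x y).reverse)).symm
  have hsetY : ∀ b ∈ p.support,
      {v : V | G.degree v = 1 ∧ v ∉ ({x, y} : Set V) ∧ SameComp G b v y}
        = L \ X (G.dist x b + 1) := by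
    intro b hb
    have hbrev : b ∈ (SemiCentroidAux.P hT y x).support := by
      rw [hrev, SimpleGraph.Walk.support_reverse, List.mem_reverse]; exact hb
    have hsum : G.dist x b + G.dist b y = k := (SemiCentroidAux.mem_P_iff hT b x y).mp hb
    ext v
    have hcl := SemiCentroidAux.claimX hT hbrev v
    have hp := SemiCentroidAux.parity hT x y v
    have c1 : G.dist y x = k := SimpleGraph.dist_comm.trans hkdef.symm
    have c2 : G.dist y b = G.dist b y := SimpleGraph.dist_comm
    have c3 : G.dist v y = G.dist y v := SimpleGraph.dist_comm
    rw [c1, c2] at hcl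
    simp only [Set.mem_setOf_eq, Set.mem_insert_iff, Set.mem_singleton_iff, not_or,
      Set.mem_diff, hXmem, hLmem]
    rw [hcl]
    rw [c3] at hp
    constructor
    · rintro ⟨h1, ⟨h2, h3⟩, h4⟩
      exact ⟨⟨h1, h2, h3⟩, fun hcon => by omega⟩
    · rintro ⟨⟨h1, h2, h3⟩, h4⟩
      refine ⟨h1, ⟨h2, h3⟩, ?_⟩
      by_contra hcon
      exact h4 ⟨⟨h1, h2, h3⟩, by omega⟩
  -- counting facts
  have hLfin : L.Finite := Set.toFinite _
  have hXsub : ∀ i, X i ⊆ L := fun i v hv => ((hXmem i v).mp hv).1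
  have hNle : ∀ i, N i ≤ n := by
    intro i
    rw [hNdef, ← hcount]
    exact Set.ncard_le_ncard (hXsub i) hLfin
  have hmono : ∀ i j, i ≤ j → N i ≤ N j := by
    intro i j hij
    refine Set.ncard_le_ncard ?_ (Set.toFinite _)
    intro v hv
    rw [hXmem] at hv ⊢
    exact ⟨hv.1, by omega⟩
  have hYcard : ∀ b ∈ p.support,
      2 * ({v : V | G.degree v = 1 ∧ v ∉ ({x, y} : Set V) ∧ SameComp G b v y}).ncard ≤ n
        ↔ n ≤ 2 * N (G.dist x b + 1) := by
    intro b hb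
    rw [hsetY b hb, Set.ncard_diff (hXsub _), hcount]
    have h1 : N (G.dist x b + 1) = (X (G.dist x b + 1)).ncard := rfl
    have h2 := hNle (G.dist x b + 1)
    omega
  -- value at 1 : no leaves strictly on the x side of the first edge
  have hN1 : N 1 = 0 := by
    rw [hNdef, Set.ncard_eq_zero (Set.toFinite _)]
    ext v
    simp only [Set.mem_empty_iff_false, iff_false]
    intro hv
    rw [hXmem, hLmem] at hv
    obtain ⟨⟨hd1, hvx, hvy⟩, hlt⟩ := hv
    have hadjx : G.Adj x (p.getVert 1) := by
      have := p.adj_getVert_succ (i := 0) (by omega)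
      rwa [SimpleGraph.Walk.getVert_zero] at this
    have h1 : G.dist (p.getVert 1) v + 1 = G.dist x v :=
      SemiCentroidAux.leaf_dist hT hx hadjx hvx
    have h2 : G.dist (p.getVert 1) y + 1 = k := by
      have := (hgv 1 (by omega)).2; omega
    have h3 : G.dist y v ≤ G.dist y (p.getVert 1) + G.dist (p.getVert 1) v := hc.dist_triangle
    have c1 : G.dist y (p.getVert 1) = G.dist (p.getVert 1) y := SimpleGraph.dist_comm
    omega
  -- value at k : all leaves
  have hXkL : X k = L := by
    apply Set.Subset.antisymm (hXsub k)
    intro v hv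
    rw [hLmem] at hv
    obtain ⟨hd1, hvx, hvy⟩ := hv
    rw [hXmem, hLmem]
    refine ⟨⟨hd1, hvx, hvy⟩, ?_⟩
    have hadjy : G.Adj y (p.getVert (k - 1)) := by
      have := p.adj_getVert_succ (i := k - 1) (by omega)
      rw [show k - 1 + 1 = k by omega] at this
      have hk' : p.getVert k = y := by rw [← hplen, SimpleGraph.Walk.getVert_length]
      rw [hk'] at this
      exact this.symm
    have h1 : G.dist (p.getVert (k - 1)) v + 1 = G.dist y v :=
      SemiCentroidAux.leaf_dist hT hy hadjy hvy
    have h2 : G.dist x (p.getVert (k - 1)) = k - 1 := (hgv (k - 1) (by omega)).1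
    have h3 : G.dist x v ≤ G.dist x (p.getVert (k - 1)) + G.dist (p.getVert (k - 1)) v :=
      hc.dist_triangle
    omega
  have hNk : N k = n := by
    show (X k).ncard = n
    rw [hXkL]; exact hcount
  -- index bounds for branch points on the path
  have hib : ∀ b, b ∈ p.support → G.degree b = 3 →
      1 ≤ G.dist x b ∧ G.dist x b + 1 ≤ k := by
    intro b hb hd3
    have hsum : G.dist x b + G.dist b y = k := (SemiCentroidAux.mem_P_iff hT b x y).mp hb
    have hbx : b ≠ x := fun h => by rw [h, hx] at hd3; omega
    have hby : b ≠ y := fun h => by rw [h, hy] at hd3; omega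
    have h1 : G.dist x b ≠ 0 := fun h => hbx ((hc.dist_eq_zero_iff).mp h).symm
    have h2 : G.dist b y ≠ 0 := fun h => hby ((hc.dist_eq_zero_iff).mp h)
    omega
  -- full characterization of the defining condition in terms of the index
  have hcond : ∀ b, b ∈ p.support →
      ((2 * ({v : V | G.degree v = 1 ∧ v ∉ ({x, y} : Set V) ∧ SameComp G b v x}).ncard < n ∧
        2 * ({v : V | G.degree v = 1 ∧ v ∉ ({x, y} : Set V) ∧ SameComp G b v y}).ncard ≤ n)
        ↔ (2 * N (G.dist x b) < n ∧ n ≤ 2 * N (G.dist x b + 1))) := by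
    intro b hb
    rw [hsetX b hb, hYcard b hb]

  -- existence: k ≥ 2
  obtain ⟨b0, hb0deg, hb0path⟩ := hbranch
  have hb0 : b0 ∈ p.support := (hsupp_iff b0).mp hb0path
  have hk2 : 2 ≤ k := by have := hib b0 hb0 hb0deg; omega
  -- the semi-centroid index
  set istar := Nat.findGreatest (fun i => 2 * N i < n) (k - 1) with histar
  have hP1 : 2 * N 1 < n := by rw [hN1]; omega
  have h1le : 1 ≤ istar := Nat.le_findGreatest (by omega) hP1
  have hile : istar ≤ k - 1 := Nat.findGreatest_le _
  have hspec : 2 * N istar < n := Nat.findGreatest_spec (P := fun i => 2 * N i < n) (m := 1) (n := k - 1) (by omega) hP1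
  have hnext : n ≤ 2 * N (istar + 1) := by
    rcases eq_or_lt_of_le hile with heq | hlt
    · rw [show istar + 1 = k by omega, hNk]; omega
    · have := Nat.findGreatest_is_greatest (P := fun i => 2 * N i < n)
        (k := istar + 1) (n := k - 1) (by omega) (by omega)
      omega
  set b := p.getVert istar with hbdef
  have hbmem : b ∈ p.support := by
    rw [SimpleGraph.Walk.mem_support_iff_exists_getVert]
    exact ⟨istar, rfl, by omega⟩
  have hdistb : G.dist x b = istar := (hgv istar (by omega)).1
  -- degree of b is 3
  have hz1 : G.Adj (p.getVert (istar - 1)) b := by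
    have := p.adj_getVert_succ (i := istar - 1) (by omega)
    rwa [show istar - 1 + 1 = istar by omega] at this
  have hz2 : G.Adj b (p.getVert (istar + 1)) := p.adj_getVert_succ (by omega)
  have hne12 : p.getVert (istar - 1) ≠ p.getVert (istar + 1) := by
    intro h
    have e1 := (hgv (istar - 1) (by omega)).1
    have e2 := (hgv (istar + 1) (by omega)).1
    rw [h] at e1
    omega
  have hdegb : G.degree b = 3 := by
    rcases hdeg b with h1 | h3
    · exfalso
      have h2 : 1 < G.degree b := by
        apply Finset.one_lt_card.mpr
        exact ⟨p.getVert (istar - 1), (G.mem_neighborFinset b _).mpr hz1.symm,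
          p.getVert (istar + 1), (G.mem_neighborFinset b _).mpr hz2, hne12⟩
      omega
    · exact h3
  refine ⟨b, ⟨⟨hdegb, (hsupp_iff b).mpr hbmem⟩, ?_⟩, ?_⟩
  · rw [hcond b hbmem, hdistb]
    exact ⟨hspec, hnext⟩
  · rintro b' ⟨⟨hdeg', hpath'⟩, hcnd'⟩
    have hb' : b' ∈ p.support := (hsupp_iff b').mp hpath'
    have hnum' := (hcond b' hb').mp hcnd'
    have hbounds' := hib b' hb' hdeg'
    set i' := G.dist x b' with hi'def
    -- i' = istar
    have hieq : i' = istar := by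
      by_contra hneq
      rcases lt_or_gt_of_ne hneq with hlt | hgt
      · have h1 : i' + 1 ≤ istar := by omega
        have h2 : N (i' + 1) ≤ N istar := hmono _ _ h1
        omega
      · have h1 : istar + 1 ≤ i' := by omega
        have h2 : N (istar + 1) ≤ N i' := hmono _ _ h1
        omega
    exact SemiCentroidAux.eq_of_mem_dist hT hb' hbmem (by rw [hdistb, ← hieq])
end

section
/- Fix β' ≥ 0 and ε > 0. Let A ⊆ {1,...,n} and A' ⊆ {1,...,n} be independent uniformly random subsets of sizes a and a' respectively, with εn ≤ a, a' ≤ (1-ε)n. Then for all sufficiently large n (depending only on β' and ε), E[|A ∩ A'|^{β'}] ≥ (1-ε)(a a'/n)^{β'}. -/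
open scoped Classical ENNReal
open SimpleGraph MeasureTheory ProbabilityTheory

set_option maxHeartbeats 1000000

lemma count_contains {n : ℕ} (a : ℕ) (B : Finset (Fin n)) (hB : B.card ≤ a) :
    ((Finset.powersetCard a (Finset.univ : Finset (Fin n))).filter (fun A => B ⊆ A)).card
      = (n - B.card).choose (a - B.card) := by
  have h1 : ((Finset.univ : Finset (Fin n)) \ B).card = n - B.card := by
    rw [Finset.card_sdiff_of_subset (Finset.subset_univ B), Finset.card_univ, Fintype.card_fin]
  rw [← h1, ← Finset.card_powersetCard (a - B.card) (Finset.univ \ B)]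
  apply Finset.card_bij (fun A _ => A \ B)
  · intro A hA
    simp only [Finset.mem_filter, Finset.mem_powersetCard_univ] at hA
    rw [Finset.mem_powersetCard]
    exact ⟨Finset.sdiff_subset_sdiff (Finset.subset_univ A) le_rfl,
      by rw [Finset.card_sdiff_of_subset hA.2, hA.1]⟩
  · intro A₁ h₁ A₂ h₂ h
    simp only [Finset.mem_filter, Finset.mem_powersetCard_univ] at h₁ h₂
    rw [← Finset.sdiff_union_of_subset h₁.2, ← Finset.sdiff_union_of_subset h₂.2, h]
  · intro C hC
    rw [Finset.mem_powersetCard] at hC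
    have hdisj : Disjoint C B := Finset.disjoint_of_subset_left hC.1 Finset.sdiff_disjoint
    refine ⟨C ∪ B, ?_, ?_⟩
    · simp only [Finset.mem_filter, Finset.mem_powersetCard_univ]
      constructor
      · rw [Finset.card_union_of_disjoint hdisj, hC.2, Nat.sub_add_cancel hB]
      · exact Finset.subset_union_right
    · rw [Finset.union_sdiff_right, Finset.sdiff_eq_self_of_disjoint hdisj]

lemma sumD1' {n : ℕ} (a : ℕ) (ha : 1 ≤ a) (i : Fin n) :
    ∑ A ∈ Finset.powersetCard a (Finset.univ : Finset (Fin n)),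
      (if i ∈ A then (1:ℝ) else 0) = ((n-1).choose (a-1) : ℝ) := by
  rw [Finset.sum_boole]
  have : ∀ A : Finset (Fin n), i ∈ A ↔ {i} ⊆ A := by simp
  simp_rw [this]
  rw [count_contains a {i} (by simpa using ha)]
  simp

lemma sumD2' {n : ℕ} (a : ℕ) (ha : 2 ≤ a) (i j : Fin n) (hij : i ≠ j) :
    ∑ A ∈ Finset.powersetCard a (Finset.univ : Finset (Fin n)),
      (if i ∈ A ∧ j ∈ A then (1:ℝ) else 0) = ((n-2).choose (a-2) : ℝ) := by
  rw [Finset.sum_boole]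
  have : ∀ A : Finset (Fin n), (i ∈ A ∧ j ∈ A) ↔ ({i, j} : Finset (Fin n)) ⊆ A := by
    intro A; simp [Finset.insert_subset_iff]
  simp_rw [this]
  have hcard : ({i, j} : Finset (Fin n)).card = 2 := Finset.card_pair hij
  rw [count_contains a {i,j} (by rw [hcard]; exact ha), hcard]

lemma choose_id (n a : ℕ) (h1 : 1 ≤ a) (h2 : a ≤ n) :
    (n:ℝ) * ((n-1).choose (a-1)) = a * n.choose a := by
  have := Nat.add_one_mul_choose_eq (n-1) (a-1)
  rw [Nat.sub_add_cancel (le_trans h1 h2),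
    Nat.sub_add_cancel h1] at this
  rw [mul_comm (a:ℝ)]
  exact_mod_cast congrArg (Nat.cast : ℕ → ℝ) this

lemma card_inter_eq_sum {n : ℕ} (A A' : Finset (Fin n)) :
    ((A ∩ A').card : ℝ)
      = ∑ i : Fin n, (if i ∈ A then (1:ℝ) else 0) * (if i ∈ A' then (1:ℝ) else 0) := by
  have : ∀ i : Fin n, (if i ∈ A then (1:ℝ) else 0) * (if i ∈ A' then (1:ℝ) else 0)
      = if i ∈ A ∧ i ∈ A' then (1:ℝ) else 0 := by
    intro i; by_cases h1 : i ∈ A <;> by_cases h2 : i ∈ A' <;> simp [h1, h2]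
  simp_rw [this]
  rw [Finset.sum_boole]
  congr 1
  congr 1
  ext i
  simp

lemma S1_eq {n : ℕ} (a a' : ℕ) (ha : 1 ≤ a) (ha' : 1 ≤ a') :
    ∑ A ∈ Finset.powersetCard a (Finset.univ : Finset (Fin n)),
      ∑ A' ∈ Finset.powersetCard a' (Finset.univ : Finset (Fin n)),
        ((A ∩ A').card : ℝ)
    = n * ((n-1).choose (a-1) : ℝ) * ((n-1).choose (a'-1) : ℝ) := by
  simp_rw [card_inter_eq_sum]
  rw [Finset.sum_congr rfl (fun A _ => Finset.sum_comm)]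
  simp_rw [← Finset.mul_sum, sumD1' a' ha']
  rw [Finset.sum_comm]
  simp_rw [← Finset.sum_mul, sumD1' a ha]
  rw [Finset.sum_const, Finset.card_univ, Fintype.card_fin, nsmul_eq_mul, mul_assoc]

lemma sum_pair_count {n : ℕ} (a : ℕ) (ha : 2 ≤ a) (i j : Fin n) :
    ∑ A ∈ Finset.powersetCard a (Finset.univ : Finset (Fin n)),
      (if i ∈ A then (1:ℝ) else 0) * (if j ∈ A then (1:ℝ) else 0)
    = if i = j then ((n-1).choose (a-1) : ℝ) else ((n-2).choose (a-2) : ℝ) := by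
  by_cases h : i = j
  · subst h
    have e : ∀ A : Finset (Fin n),
        (if i ∈ A then (1:ℝ) else 0) * (if i ∈ A then (1:ℝ) else 0)
        = if i ∈ A then (1:ℝ) else 0 := by
      intro A; by_cases hi : i ∈ A <;> simp [hi]
    simp_rw [e]
    rw [sumD1' a (le_trans one_le_two ha) i]; simp
  · have e : ∀ A : Finset (Fin n),
        (if i ∈ A then (1:ℝ) else 0) * (if j ∈ A then (1:ℝ) else 0)
        = if i ∈ A ∧ j ∈ A then (1:ℝ) else 0 := by
      intro A; by_cases hi : i ∈ A <;> by_cases hj : j ∈ A <;> simp [hi, hj]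
    simp_rw [e]
    rw [sumD2' a ha i j h, if_neg h]

lemma S2_eq {n : ℕ} (a a' : ℕ) (ha : 2 ≤ a) (ha' : 2 ≤ a') :
    ∑ A ∈ Finset.powersetCard a (Finset.univ : Finset (Fin n)),
      ∑ A' ∈ Finset.powersetCard a' (Finset.univ : Finset (Fin n)),
        ((A ∩ A').card : ℝ)^2
    = (n:ℝ) * ((n-1).choose (a-1) : ℝ) * ((n-1).choose (a'-1) : ℝ)
      + (n:ℝ) * ((n:ℝ)-1) * ((n-2).choose (a-2) : ℝ) * ((n-2).choose (a'-2) : ℝ) := by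
  have expand : ∀ A A' : Finset (Fin n), ((A ∩ A').card : ℝ)^2
      = ∑ q ∈ (Finset.univ : Finset (Fin n)) ×ˢ (Finset.univ : Finset (Fin n)),
          ((if q.1 ∈ A then (1:ℝ) else 0) * (if q.2 ∈ A then (1:ℝ) else 0))
          * ((if q.1 ∈ A' then (1:ℝ) else 0) * (if q.2 ∈ A' then (1:ℝ) else 0)) := by
    intro A A'
    rw [sq, card_inter_eq_sum, Finset.sum_mul_sum, ← Finset.sum_product']
    apply Finset.sum_congr rfl
    intro q _
    ring
  simp_rw [expand]
  rw [Finset.sum_congr rfl (fun A _ => Finset.sum_comm)]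
  simp_rw [← Finset.mul_sum]
  rw [Finset.sum_comm]
  simp_rw [← Finset.sum_mul, sum_pair_count a ha, sum_pair_count a' ha']
  rw [Finset.sum_product]
  have inner : ∀ i : Fin n,
      ∑ j : Fin n, ((if i = j then ((n-1).choose (a-1) : ℝ) else ((n-2).choose (a-2) : ℝ))
        * (if i = j then ((n-1).choose (a'-1) : ℝ) else ((n-2).choose (a'-2) : ℝ)))
      = ((n-1).choose (a-1) : ℝ) * ((n-1).choose (a'-1) : ℝ)
        + ((n:ℝ) - 1) * (((n-2).choose (a-2) : ℝ) * ((n-2).choose (a'-2) : ℝ)) := by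
    intro i
    set x : ℝ := ((n-1).choose (a-1) : ℝ) * ((n-1).choose (a'-1) : ℝ) with hx
    set y : ℝ := ((n-2).choose (a-2) : ℝ) * ((n-2).choose (a'-2) : ℝ) with hy
    have e : ∀ j : Fin n,
        ((if i = j then ((n-1).choose (a-1) : ℝ) else ((n-2).choose (a-2) : ℝ))
         * (if i = j then ((n-1).choose (a'-1) : ℝ) else ((n-2).choose (a'-2) : ℝ)))
        = y + (if i = j then x - y else 0) := by
      intro j; by_cases h : i = j <;> simp [h, hx, hy]
    simp_rw [e]
    rw [Finset.sum_add_distrib, Finset.sum_const, Finset.sum_ite_eq, if_pos (Finset.mem_univ i),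
      Finset.card_univ, Fintype.card_fin, nsmul_eq_mul]
    have hn : 1 ≤ n := Nat.pos_of_ne_zero (by rintro rfl; exact i.elim0)
    have : (1:ℝ) ≤ (n:ℝ) := by exact_mod_cast hn
    ring
  simp_rw [inner]
  rw [Finset.sum_const, Finset.card_univ, Fintype.card_fin, nsmul_eq_mul]
  ring


lemma aux_keynn (n a a' : ℝ) (h2 : 2 ≤ a') (hn : a' ≤ n) (ha : 0 ≤ a) :
    n * ((a-1) * (a'-1)) ≤ (n-1) * (a*a') := by
  nlinarith [mul_nonneg ha (by linarith : (0:ℝ) ≤ n - a')]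

lemma aux_D2 (n a a' C C' : ℝ) (hkey : n * ((a-1)*(a'-1)) ≤ (n-1)*(a*a'))
    (hw : 0 ≤ a*a'*(C*C')) :
    ((a-1) * (a'-1)) * ((a*C) * (a'*C')) * n ≤ (n-1) * (C*C'*(a*a')^2) := by
  nlinarith [mul_le_mul_of_nonneg_right hkey hw]

lemma aux_var (S P m : ℝ) (h : S ≤ P * m^2) :
    P*m + S - 2*m*(P*m) + P*m^2 ≤ P*m := by nlinarith

lemma aux_cheb (X m d : ℝ) (hX : X < (1-d)*m) (hXnn : 0 ≤ X) (hd : 0 < d) (hm : 0 < m) :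
    (d*m)^2 ≤ (X - m)^2 := by
  have h1 : 0 ≤ (1-d)*m - X := by linarith
  have h2 : 0 ≤ (1+d)*m - X := by nlinarith [mul_pos hd hm]
  nlinarith [mul_nonneg h1 h2]

lemma aux_kd (b e : ℝ) (hb : 0 ≤ b) (he : 0 < e) : (⌈b⌉₊:ℝ) * (e/(2*(b+1))) ≤ e/2 := by
  have h1 : (⌈b⌉₊:ℝ) ≤ b+1 := (Nat.ceil_lt_add_one hb).le
  have h2 : (0:ℝ) < e/(2*(b+1)) := by positivity
  calc (⌈b⌉₊:ℝ) * (e/(2*(b+1))) ≤ (b+1) * (e/(2*(b+1))) := mul_le_mul_of_nonneg_right h1 h2.le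
   _ = e/2 := by field_simp

lemma aux_bern (b d e : ℝ) (hb : 0 ≤ b) (hd : 0 < d) (hd1 : d ≤ 1/4)
    (h : (⌈b⌉₊ : ℝ) * d ≤ e/2) : 1 - e/2 ≤ (1-d) ^ b := by
  have h1 : (0:ℝ) < 1 - d := by linarith
  have h2 : (1:ℝ)-d ≤ 1 := by linarith
  have step1 : (1-d)^(⌈b⌉₊:ℕ) ≤ (1-d) ^ b := by
    rw [← Real.rpow_natCast (1-d) ⌈b⌉₊]
    exact Real.rpow_le_rpow_of_exponent_ge h1 h2 (Nat.le_ceil b)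
  have step2 : 1 - (⌈b⌉₊:ℝ)*d ≤ (1-d)^(⌈b⌉₊:ℕ) := by
    have h3 := one_add_mul_le_pow (by linarith : (-2:ℝ) ≤ -d) ⌈b⌉₊
    have e1 : (1 + -d) = (1 - d) := by ring
    rw [e1] at h3
    linarith
  calc 1 - e/2 ≤ 1 - (⌈b⌉₊:ℝ)*d := by linarith
   _ ≤ _ := le_trans step2 step1

lemma aux_sq (e : ℝ) : 1 - e ≤ (1-e/2)*(1-e/2) := by nlinarith [sq_nonneg (e/2)]


/-- for independent uniform random subsets `A, A'` of `{1,…,n}` of sizes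
`a, a' ∈ [εn, (1-ε)n]`, for all sufficiently large `n` (depending only on `β'` and `ε`),
`E[|A ∩ A'|^{β'}] ≥ (1-ε)(a a'/n)^{β'}`. -/
theorem hypergeometric_moment_lower_bound (β' : ℝ) (hβ : 0 ≤ β') (ε : ℝ) (hε : 0 < ε) :
    ∃ N : ℕ, ∀ n : ℕ, N ≤ n → ∀ a a' : ℕ,
      ε * n ≤ (a : ℝ) → (a : ℝ) ≤ (1 - ε) * n →
      ε * n ≤ (a' : ℝ) → (a' : ℝ) ≤ (1 - ε) * n →
      (1 - ε) * (((a : ℝ) * (a' : ℝ)) / n) ^ β' ≤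
        (∑ A ∈ Finset.powersetCard a (Finset.univ : Finset (Fin n)),
          ∑ A' ∈ Finset.powersetCard a' (Finset.univ : Finset (Fin n)),
            (((A ∩ A').card : ℝ)) ^ β') /
          ((n.choose a : ℝ) * (n.choose a' : ℝ)) := by
  set δ : ℝ := ε / (2 * (β' + 1)) with hδdef
  have hβ1 : (0:ℝ) < β' + 1 := by linarith
  have hδpos : 0 < δ := div_pos hε (by linarith)
  refine ⟨⌈2/ε + 2/(δ^2 * ε^3)⌉₊ + 1, ?_⟩
  intro n hn a a' h1 h2 h3 h4
  -- basic numeric facts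
  have hNn : (2/ε + 2/(δ^2 * ε^3) : ℝ) ≤ n := by
    calc (2/ε + 2/(δ^2 * ε^3) : ℝ) ≤ ⌈2/ε + 2/(δ^2 * ε^3)⌉₊ := Nat.le_ceil _
    _ ≤ n := by exact_mod_cast le_trans (Nat.le_succ _) hn
  have hterm2 : (0:ℝ) < 2/(δ^2 * ε^3) := by positivity
  have hterm1 : (0:ℝ) < 2/ε := by positivity
  have hn1 : (2:ℝ)/ε ≤ n := by linarith
  have hn2 : (2:ℝ)/(δ^2 * ε^3) ≤ n := by linarith
  have hnpos : (0:ℝ) < n := lt_of_lt_of_le hterm1 hn1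
  have hεn2 : (2:ℝ) ≤ ε * n := by
    rw [div_le_iff₀ hε] at hn1; linarith
  have ha2 : (2:ℝ) ≤ (a:ℝ) := le_trans hεn2 h1
  have ha'2 : (2:ℝ) ≤ (a':ℝ) := le_trans hεn2 h3
  have ha2n : 2 ≤ a := by exact_mod_cast ha2
  have ha'2n : 2 ≤ a' := by exact_mod_cast ha'2
  have hεhalf : ε ≤ 1/2 := by
    have := (mul_le_mul_iff_left₀ hnpos).mp (le_trans h1 h2)
    linarith
  have hone : (1 - ε) * n ≤ 1 * n := mul_le_mul_of_nonneg_right (by linarith) hnpos.le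
  have hanR : (a:ℝ) ≤ n := by linarith
  have ha'nR : (a':ℝ) ≤ n := by linarith
  have han : a ≤ n := by exact_mod_cast hanR
  have ha'n : a' ≤ n := by exact_mod_cast ha'nR
  have hδ14 : δ ≤ 1/4 := by
    rw [hδdef, div_le_iff₀ (by linarith : (0:ℝ) < 2 * (β' + 1))]
    linarith
  have hn2R : (2:ℝ) ≤ n := by
    have : ε * n ≤ (1/2) * n := mul_le_mul_of_nonneg_right hεhalf hnpos.le
    linarith
  -- notation
  set C : ℝ := (n.choose a : ℝ) with hCdef
  set C' : ℝ := (n.choose a' : ℝ) with hC'def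
  have hCpos : 0 < C := by rw [hCdef]; exact_mod_cast Nat.choose_pos han
  have hC'pos : 0 < C' := by rw [hC'def]; exact_mod_cast Nat.choose_pos ha'n
  set μ : ℝ := (a:ℝ) * (a':ℝ) / n with hμdef
  have hμpos : 0 < μ := by positivity
  have hμlb : ε^2 * n ≤ μ := by
    rw [hμdef, le_div_iff₀ hnpos]
    nlinarith [mul_le_mul h1 h3 (by positivity : (0:ℝ) ≤ ε * n) (by positivity : (0:ℝ) ≤ (a:ℝ))]
  set D1a : ℝ := ((n-1).choose (a-1) : ℝ) with hD1adef
  set D1a' : ℝ := ((n-1).choose (a'-1) : ℝ) with hD1a'def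
  set D2a : ℝ := ((n-2).choose (a-2) : ℝ) with hD2adef
  set D2a' : ℝ := ((n-2).choose (a'-2) : ℝ) with hD2a'def
  -- choose identities
  have hid1 : (n:ℝ) * D1a = a * C := choose_id n a (by omega) han
  have hid1' : (n:ℝ) * D1a' = a' * C' := choose_id n a' (by omega) ha'n
  have hsub1 : ((n-1:ℕ):ℝ) = (n:ℝ) - 1 := by
    have : 1 ≤ n := by omega
    push_cast [Nat.cast_sub this]; ring
  have hsuba : ((a-1:ℕ):ℝ) = (a:ℝ) - 1 := by
    have : 1 ≤ a := by omega
    push_cast [Nat.cast_sub this]; ring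
  have hsuba' : ((a'-1:ℕ):ℝ) = (a':ℝ) - 1 := by
    have : 1 ≤ a' := by omega
    push_cast [Nat.cast_sub this]; ring
  have hid2 : ((n:ℝ) - 1) * D2a = ((a:ℝ) - 1) * D1a := by
    have h := choose_id (n-1) (a-1) (by omega) (by omega)
    rw [show n - 1 - 1 = n - 2 by omega, show a - 1 - 1 = a - 2 by omega] at h
    rw [← hsub1, ← hsuba]
    exact h
  have hid2' : ((n:ℝ) - 1) * D2a' = ((a':ℝ) - 1) * D1a' := by
    have h := choose_id (n-1) (a'-1) (by omega) (by omega)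
    rw [show n - 1 - 1 = n - 2 by omega, show a' - 1 - 1 = a' - 2 by omega] at h
    rw [← hsub1, ← hsuba']
    exact h
  -- first moment
  have hS1 : (n:ℝ) * D1a * D1a' = C * C' * μ := by
    have e1 : (n:ℝ) * (C * C' * μ) = ((a:ℝ) * C) * ((a':ℝ) * C') := by
      rw [hμdef]; field_simp
    have : (n:ℝ) * ((n:ℝ) * D1a * D1a') = (n:ℝ) * (C * C' * μ) := by
      rw [e1, ← hid1, ← hid1']; ring
    exact mul_left_cancel₀ (ne_of_gt hnpos) this
  -- second moment bound
  have hD2bound : (n:ℝ) * ((n:ℝ) - 1) * D2a * D2a' ≤ C * C' * μ^2 := by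
    have hkeynn : (n:ℝ) * (((a:ℝ)-1) * ((a':ℝ)-1)) ≤ ((n:ℝ)-1) * ((a:ℝ)*(a':ℝ)) :=
      aux_keynn (n:ℝ) (a:ℝ) (a':ℝ) ha'2 ha'nR (by linarith)
    have hn1R : (0:ℝ) < (n:ℝ) - 1 := by linarith
    have hfac : (0:ℝ) < (n:ℝ)^2 * ((n:ℝ) - 1) := by positivity
    rw [← mul_le_mul_iff_right₀ hfac]
    have hL : (n:ℝ)^2 * ((n:ℝ) - 1) * ((n:ℝ) * ((n:ℝ) - 1) * D2a * D2a')
        = ((((n:ℝ)-1) * D2a) * (((n:ℝ)-1) * D2a')) * (n:ℝ)^3 := by ring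
    have hR : (n:ℝ)^2 * ((n:ℝ) - 1) * (C * C' * μ^2)
        = ((n:ℝ) - 1) * (C * C' * ((a:ℝ)*(a':ℝ))^2) := by
      rw [hμdef]; field_simp
    rw [hL, hR, hid2, hid2']
    have hLHS : (((a:ℝ)-1) * D1a) * (((a':ℝ)-1) * D1a') * (n:ℝ)^3
        = ((((a:ℝ)-1) * ((a':ℝ)-1)) * (((n:ℝ) * D1a) * ((n:ℝ) * D1a'))) * (n:ℝ) := by ring
    rw [hLHS, hid1, hid1']
    have hw : (0:ℝ) ≤ (a:ℝ)*(a':ℝ)*(C*C') := by positivity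
    exact aux_D2 (n:ℝ) (a:ℝ) (a':ℝ) C C' hkeynn hw
  -- product finset
  set s : Finset (Finset (Fin n) × Finset (Fin n)) :=
    (Finset.powersetCard a (Finset.univ : Finset (Fin n))) ×ˢ
      (Finset.powersetCard a' (Finset.univ : Finset (Fin n))) with hsdef
  have hscard : (s.card : ℝ) = C * C' := by
    rw [hsdef, Finset.card_product, Finset.card_powersetCard, Finset.card_powersetCard,
      Finset.card_univ, Fintype.card_fin]
    push_cast; ring
  have hsum1 : ∑ p ∈ s, ((p.1 ∩ p.2).card : ℝ) = C * C' * μ := by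
    rw [hsdef, Finset.sum_product, ← hS1]
    exact S1_eq a a' (by omega) (by omega)
  have hsum2 : ∑ p ∈ s, ((p.1 ∩ p.2).card : ℝ)^2
      = C * C' * μ + (n:ℝ) * ((n:ℝ)-1) * D2a * D2a' := by
    rw [hsdef, Finset.sum_product, S2_eq a a' ha2n ha'2n, hS1]
  have hvar : ∑ p ∈ s, (((p.1 ∩ p.2).card : ℝ) - μ)^2 ≤ C * C' * μ := by
    have e : ∀ p : Finset (Fin n) × Finset (Fin n),
        (((p.1 ∩ p.2).card : ℝ) - μ)^2
        = ((p.1 ∩ p.2).card : ℝ)^2 - 2*μ*((p.1 ∩ p.2).card : ℝ) + μ^2 := by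
      intro p; ring
    simp_rw [e]
    rw [Finset.sum_add_distrib, Finset.sum_sub_distrib, ← Finset.mul_sum, Finset.sum_const,
      nsmul_eq_mul, hsum1, hsum2, hscard]
    exact aux_var _ _ _ hD2bound
  -- Chebyshev
  set bad : Finset (Finset (Fin n) × Finset (Fin n)) :=
    s.filter (fun p => ((p.1 ∩ p.2).card : ℝ) < (1-δ)*μ) with hbaddef
  have hcheb : (bad.card : ℝ) * (δ*μ)^2 ≤ C * C' * μ := by
    have step : (bad.card : ℝ) * (δ*μ)^2 ≤ ∑ p ∈ bad, (((p.1 ∩ p.2).card : ℝ) - μ)^2 := by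
      rw [show ((bad.card : ℝ)) * ((δ*μ)^2) = ∑ _p ∈ bad, (δ*μ)^2 by
        rw [Finset.sum_const, nsmul_eq_mul]]
      apply Finset.sum_le_sum
      intro p hp
      rw [hbaddef, Finset.mem_filter] at hp
      exact aux_cheb _ μ δ hp.2 (by positivity) hδpos hμpos
    refine le_trans step (le_trans ?_ hvar)
    apply Finset.sum_le_sum_of_subset_of_nonneg (Finset.filter_subset _ _)
    intro p _ _; positivity
  have hbadcard : (bad.card : ℝ) ≤ C * C' / (δ^2 * μ) := by
    rw [le_div_iff₀ (by positivity)]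
    calc (bad.card : ℝ) * (δ^2 * μ) = ((bad.card : ℝ) * (δ*μ)^2) / μ := by
          field_simp
    _ ≤ (C * C' * μ) / μ := by gcongr
    _ = C * C' := by field_simp
  -- good pairs
  set good : Finset (Finset (Fin n) × Finset (Fin n)) :=
    s.filter (fun p => ¬ ((p.1 ∩ p.2).card : ℝ) < (1-δ)*μ) with hgooddef
  have hsplitn : bad.card + good.card = s.card :=
    Finset.card_filter_add_card_filter_not _
  have hsplit : (bad.card : ℝ) + (good.card : ℝ) = C * C' := by
    rw [← hscard]; exact_mod_cast congrArg (Nat.cast : ℕ → ℝ) hsplitn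
  have hTlb : (good.card : ℝ) * ((1-δ)*μ) ^ β'
      ≤ ∑ p ∈ s, ((p.1 ∩ p.2).card : ℝ) ^ β' := by
    calc (good.card : ℝ) * ((1-δ)*μ) ^ β' = ∑ _p ∈ good, ((1-δ)*μ) ^ β' := by
          rw [Finset.sum_const, nsmul_eq_mul]
    _ ≤ ∑ p ∈ good, ((p.1 ∩ p.2).card : ℝ) ^ β' := by
        apply Finset.sum_le_sum
        intro p hp
        rw [hgooddef, Finset.mem_filter] at hp
        exact Real.rpow_le_rpow
          (mul_nonneg (by linarith only [hδ14] : (0:ℝ) ≤ 1-δ) hμpos.le)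
          (not_lt.mp hp.2) hβ
    _ ≤ ∑ p ∈ s, ((p.1 ∩ p.2).card : ℝ) ^ β' := by
        apply Finset.sum_le_sum_of_subset_of_nonneg (Finset.filter_subset _ _)
        intro p _ _
        exact Real.rpow_nonneg (by positivity) _
  -- bad fraction is at most ε/2
  have hd2 : 2/ε ≤ δ^2 * μ := by
    have hm1 : δ^2 * (ε^2 * (n:ℝ)) ≤ δ^2 * μ := mul_le_mul_of_nonneg_left hμlb (by positivity)
    have hm2 : 2/ε ≤ δ^2 * (ε^2 * (n:ℝ)) := by
      calc (2:ℝ)/ε = δ^2*ε^2 * (2/(δ^2*ε^3)) := by field_simp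
      _ ≤ δ^2*ε^2 * (n:ℝ) := mul_le_mul_of_nonneg_left hn2 (by positivity)
      _ = δ^2*(ε^2*(n:ℝ)) := by ring
    linarith only [hm1, hm2]
  have hη : C * C' / (δ^2 * μ) ≤ C * C' * (ε/2) := by
    have hδμ2 : (0:ℝ) < δ^2 * μ := by positivity
    have h1' : 1/(δ^2*μ) ≤ ε/2 := by
      rw [div_le_div_iff₀ hδμ2 (by norm_num : (0:ℝ) < 2)]
      have h2' := mul_le_mul_of_nonneg_left hd2 hε.le
      have h3' : ε * (2/ε) = 2 := by field_simp
      linarith only [h2', h3']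
    calc C * C' / (δ^2 * μ) = (C * C') * (1/(δ^2*μ)) := by rw [mul_one_div]
    _ ≤ (C * C') * (ε/2) := mul_le_mul_of_nonneg_left h1' (by positivity)
  have hgood_lb : C * C' * (1 - ε/2) ≤ (good.card : ℝ) := by
    have hb2 : (bad.card : ℝ) ≤ C * C' * (ε/2) := le_trans hbadcard hη
    linarith only [hsplit, hb2]
  -- conclusion
  have hbern : 1 - ε/2 ≤ (1-δ) ^ β' := by
    apply aux_bern β' δ ε hβ hδpos hδ14
    rw [hδdef]
    exact aux_kd β' ε hβ hε
  have hprod : 1 - ε ≤ (1-ε/2) * (1-δ) ^ β' := by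
    calc 1 - ε ≤ (1-ε/2)*(1-ε/2) := aux_sq ε
    _ ≤ (1-ε/2) * (1-δ) ^ β' :=
        mul_le_mul_of_nonneg_left hbern (by linarith only [hεhalf])
  have hμβpos : 0 < μ ^ β' := Real.rpow_pos_of_pos hμpos β'
  have hCC'pos : (0:ℝ) < C * C' := mul_pos hCpos hC'pos
  rw [← Finset.sum_product', ← hsdef, le_div_iff₀ hCC'pos]
  have h1δ : (0:ℝ) ≤ 1 - δ := by linarith only [hδ14]
  calc (1-ε) * μ ^ β' * (C * C')
      ≤ ((1-ε/2) * (1-δ) ^ β') * μ ^ β' * (C * C') := by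
        apply mul_le_mul_of_nonneg_right
          (mul_le_mul_of_nonneg_right hprod hμβpos.le) hCC'pos.le
    _ = (C * C' * (1 - ε/2)) * ((1-δ) ^ β' * μ ^ β') := by ring
    _ ≤ (good.card : ℝ) * ((1-δ) ^ β' * μ ^ β') := by
        apply mul_le_mul_of_nonneg_right hgood_lb
        exact mul_nonneg (Real.rpow_nonneg h1δ _) hμβpos.le
    _ = (good.card : ℝ) * ((1-δ)*μ) ^ β' := by
        rw [Real.mul_rpow h1δ hμpos.le]
    _ ≤ ∑ p ∈ s, ((p.1 ∩ p.2).card : ℝ) ^ β' := hTlb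
end
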